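/- The map T_w: ℝ → ℝ defined by T_w(x̃) = 0 if |x̃| ≤ w/2 and T_w(x̃) = x̃ - sign(x̃)·w/2 otherwise, pushes forward the probability measure with density π̃(x̃) = π_slab(0)·p_slab·1{|x̃| ≤ w/2} + p_slab·π_slab(x̃ - sign(x̃)w/2)·1{|x̃| > w/2} to the spike-and-slab measure (1-p_slab)δ_0 + p_slab·π_slab(x)dx, provided w = (1-p_slab)/(p_slab·π_slab(0)). -/

import Mathlib

open MeasureTheory
open scoped ENNReal

lemma measurable_realSign : Measurable Real.sign := by
  have h : Real.sign = fun x : ℝ => if x < 0 then (-1 : ℝ) else if 0 < x then 1 else 0 := by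
    funext x; rw [Real.sign]
  rw [h]
  exact Measurable.ite (measurableSet_lt measurable_id measurable_const) measurable_const
    (Measurable.ite (measurableSet_lt measurable_const measurable_id) measurable_const
      measurable_const)

lemma map_equiv_withDensity (e : ℝ ≃ᵐ ℝ) (ν : Measure ℝ) (g : ℝ → ℝ≥0∞)
    (hg : Measurable g) :
    Measure.map e (ν.withDensity g) = (Measure.map e ν).withDensity fun y => g (e.symm y) := by
  ext s hs
  rw [Measure.map_apply e.measurable hs, withDensity_apply _ (e.measurable hs),
    withDensity_apply _ hs,
    setLIntegral_map (f := fun y => g (e.symm y)) hs (hg.comp e.symm.measurable) e.measurable]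
  exact lintegral_congr fun x => by simp

/-- The collapsing map `T_w` pushes the latent continuous density (plateau of height
`p·π_slab(0)` on `[-w/2, w/2]`, shifted slab outside) forward to the spike-and-slab
measure `(1-p)δ₀ + p·π_slab(x)dx`, when `w = (1-p)/(p·π_slab(0))`. -/
theorem stmt8 (πslab : ℝ → ℝ) (p w : ℝ)
    (hcont : Continuous πslab) (hnn : ∀ x, 0 ≤ πslab x)
    (hint : ∫ x, πslab x = 1) (hpos : 0 < πslab 0)
    (hp : p ∈ Set.Ioo (0 : ℝ) 1)
    (hwdef : w = (1 - p) / (p * πslab 0)) :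
    Measure.map (fun x : ℝ => if |x| ≤ w / 2 then 0 else x - Real.sign x * (w / 2))
        (volume.withDensity (fun x : ℝ => ENNReal.ofReal
          (if |x| ≤ w / 2 then πslab 0 * p
           else p * πslab (x - Real.sign x * (w / 2)))))
      = ENNReal.ofReal (1 - p) • Measure.dirac (0 : ℝ)
        + ENNReal.ofReal p • volume.withDensity (fun x => ENNReal.ofReal (πslab x)) := by
  obtain ⟨hp0, hp1⟩ := hp
  have hw : 0 < w := by
    rw [hwdef]
    exact div_pos (by linarith) (by positivity)
  set c := w / 2 with hc
  have hcpos : 0 < c := by positivity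
  set T := fun x : ℝ => if |x| ≤ c then (0 : ℝ) else x - Real.sign x * c with hTdef
  set f := fun x : ℝ => ENNReal.ofReal
    (if |x| ≤ c then πslab 0 * p else p * πslab (x - Real.sign x * c)) with hfdef
  set μ := volume.withDensity f with hμdef
  have hA : MeasurableSet {x : ℝ | |x| ≤ c} :=
    measurableSet_le (continuous_abs.measurable) measurable_const
  have hTm : Measurable T :=
    Measurable.ite hA measurable_const
      (measurable_id.sub (measurable_realSign.mul measurable_const))
  have hfm : Measurable f := by
    refine Measurable.ennreal_ofReal ?_
    exact Measurable.ite hA measurable_const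
      ((hcont.measurable.comp (measurable_id.sub (measurable_realSign.mul measurable_const))).const_mul p)
  -- complement of the plateau
  have hAc : {x : ℝ | |x| ≤ c}ᶜ = Set.Iio (-c) ∪ Set.Ioi c := by
    ext x
    simp only [Set.mem_compl_iff, Set.mem_setOf_eq, abs_le, not_and_or, not_le,
      Set.mem_union, Set.mem_Iio, Set.mem_Ioi]
  have hsplit : μ = μ.restrict {x : ℝ | |x| ≤ c}
      + (μ.restrict (Set.Iio (-c)) + μ.restrict (Set.Ioi c)) := by
    rw [← Measure.restrict_union (by
        rw [Set.disjoint_left]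
        rintro x hx hx'
        simp only [Set.mem_Iio, Set.mem_Ioi] at hx hx'
        linarith) measurableSet_Ioi,
      ← hAc, Measure.restrict_add_restrict_compl hA]
  -- the plateau piece
  have hPlateau : Measure.map T (μ.restrict {x : ℝ | |x| ≤ c})
      = ENNReal.ofReal (1 - p) • Measure.dirac (0 : ℝ) := by
    have h1 : T =ᵐ[μ.restrict {x : ℝ | |x| ≤ c}] fun _ => (0 : ℝ) :=
      (ae_restrict_iff' hA).2 (ae_of_all _ fun x hx => if_pos hx)
    rw [Measure.map_congr h1, Measure.map_const]
    congr 1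
    rw [Measure.restrict_apply_univ, hμdef, withDensity_apply _ hA]
    have h2 : ∀ x ∈ {x : ℝ | |x| ≤ c}, f x = ENNReal.ofReal (πslab 0 * p) :=
      fun x hx => by simp only [hfdef]; rw [if_pos (show |x| ≤ c from hx)]
    rw [setLIntegral_congr_fun hA h2, setLIntegral_const]
    have h3 : {x : ℝ | |x| ≤ c} = Set.Icc (-c) c := by ext x; simp [abs_le]
    rw [h3, Real.volume_Icc, ← ENNReal.ofReal_mul (by positivity)]
    congr 1
    have : c - -c = w := by rw [hc]; ring
    rw [this, hwdef]
    field_simp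
  -- the right piece
  have hRight : Measure.map T (μ.restrict (Set.Ioi c))
      = (volume.restrict (Set.Ioi 0)).withDensity fun x => ENNReal.ofReal (p * πslab x) := by
    have hgm : Measurable fun x : ℝ => ENNReal.ofReal (p * πslab (x - c)) :=
      ((hcont.measurable.comp (measurable_id.sub measurable_const)).const_mul p).ennreal_ofReal
    have h1 : μ.restrict (Set.Ioi c)
        = (volume.restrict (Set.Ioi c)).withDensity fun x => ENNReal.ofReal (p * πslab (x - c)) := by
      rw [hμdef, restrict_withDensity measurableSet_Ioi]
      refine withDensity_congr_ae ((ae_restrict_iff' measurableSet_Ioi).2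
        (ae_of_all _ fun x hx => ?_))
      have hx' : c < x := hx
      have habs : ¬ |x| ≤ c := by rw [abs_le]; push_neg; intro _; linarith
      simp only [hfdef, if_neg habs, Real.sign_of_pos (hcpos.trans hx'), one_mul]
    have hT2 : T =ᵐ[(volume.restrict (Set.Ioi c)).withDensity
        fun x => ENNReal.ofReal (p * πslab (x - c))] fun x => x - c := by
      have h2 : T =ᵐ[volume.restrict (Set.Ioi c)] fun x => x - c := by
        refine (ae_restrict_iff' measurableSet_Ioi).2 (ae_of_all _ fun x hx => ?_)
        have hx' : c < x := hx
        have habs : ¬ |x| ≤ c := by rw [abs_le]; push_neg; intro _; linarith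
        simp only [hTdef, if_neg habs, Real.sign_of_pos (hcpos.trans hx'), one_mul]
      exact h2.filter_mono (withDensity_absolutelyContinuous _ _).ae_le
    rw [h1, Measure.map_congr hT2]
    have hcoe : (fun x : ℝ => x - c) = ⇑(MeasurableEquiv.addRight (-c)) := by
      funext x; simp [sub_eq_add_neg]
    rw [hcoe, map_equiv_withDensity _ _ _ hgm]
    have hmapvol : Measure.map (MeasurableEquiv.addRight (-c)) (volume.restrict (Set.Ioi c))
        = volume.restrict (Set.Ioi 0) := by
      have hset : (⇑(MeasurableEquiv.addRight (-c)) ⁻¹' Set.Ioi 0) = Set.Ioi c := by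
        ext x
        simp only [Set.mem_preimage, Set.mem_Ioi, MeasurableEquiv.coe_addRight]
        constructor <;> intro h <;> linarith
      conv_rhs => rw [← map_add_right_eq_self volume (-c)]
      rw [show Measure.map (· + (-c)) volume
          = Measure.map (MeasurableEquiv.addRight (-c)) volume from rfl,
        Measure.restrict_map (MeasurableEquiv.addRight (-c)).measurable measurableSet_Ioi, hset]
    rw [hmapvol]
    refine withDensity_congr_ae (ae_of_all _ fun y => ?_)
    simp [sub_eq_add_neg]
  -- the left piece
  have hLeft : Measure.map T (μ.restrict (Set.Iio (-c)))
      = (volume.restrict (Set.Iio 0)).withDensity fun x => ENNReal.ofReal (p * πslab x) := by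
    have hgm : Measurable fun x : ℝ => ENNReal.ofReal (p * πslab (x + c)) :=
      ((hcont.measurable.comp (measurable_id.add_const c)).const_mul p).ennreal_ofReal
    have h1 : μ.restrict (Set.Iio (-c))
        = (volume.restrict (Set.Iio (-c))).withDensity fun x => ENNReal.ofReal (p * πslab (x + c)) := by
      rw [hμdef, restrict_withDensity measurableSet_Iio]
      refine withDensity_congr_ae ((ae_restrict_iff' measurableSet_Iio).2
        (ae_of_all _ fun x hx => ?_))
      have hx' : x < -c := hx
      have habs : ¬ |x| ≤ c := by rw [abs_le]; push_neg; intro h; linarith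
      have hxneg : x < 0 := by linarith
      simp only [hfdef, if_neg habs, Real.sign_of_neg hxneg, neg_one_mul, sub_neg_eq_add]
    have hT2 : T =ᵐ[(volume.restrict (Set.Iio (-c))).withDensity
        fun x => ENNReal.ofReal (p * πslab (x + c))] fun x => x + c := by
      have h2 : T =ᵐ[volume.restrict (Set.Iio (-c))] fun x => x + c := by
        refine (ae_restrict_iff' measurableSet_Iio).2 (ae_of_all _ fun x hx => ?_)
        have hx' : x < -c := hx
        have habs : ¬ |x| ≤ c := by rw [abs_le]; push_neg; intro h; linarith
        have hxneg : x < 0 := by linarith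
        simp only [hTdef, if_neg habs, Real.sign_of_neg hxneg, neg_one_mul, sub_neg_eq_add]
      exact h2.filter_mono (withDensity_absolutelyContinuous _ _).ae_le
    rw [h1, Measure.map_congr hT2]
    have hcoe : (fun x : ℝ => x + c) = ⇑(MeasurableEquiv.addRight c) := by
      funext x; simp
    rw [hcoe, map_equiv_withDensity _ _ _ hgm]
    have hmapvol : Measure.map (MeasurableEquiv.addRight c) (volume.restrict (Set.Iio (-c)))
        = volume.restrict (Set.Iio 0) := by
      have hset : (⇑(MeasurableEquiv.addRight c) ⁻¹' Set.Iio 0) = Set.Iio (-c) := by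
        ext x
        simp only [Set.mem_preimage, Set.mem_Iio, MeasurableEquiv.coe_addRight]
        constructor <;> intro h <;> linarith
      conv_rhs => rw [← map_add_right_eq_self volume c]
      rw [show Measure.map (· + c) volume
          = Measure.map (MeasurableEquiv.addRight c) volume from rfl,
        Measure.restrict_map (MeasurableEquiv.addRight c).measurable measurableSet_Iio, hset]
    rw [hmapvol]
    refine withDensity_congr_ae (ae_of_all _ fun y => ?_)
    simp
  -- assemble
  have hslabm : Measurable fun x : ℝ => ENNReal.ofReal (πslab x) :=
    hcont.measurable.ennreal_ofReal
  calc Measure.map T μ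
      = Measure.map T (μ.restrict {x : ℝ | |x| ≤ c})
        + (Measure.map T (μ.restrict (Set.Iio (-c))) + Measure.map T (μ.restrict (Set.Ioi c))) := by
        conv_lhs => rw [hsplit]
        rw [Measure.map_add _ _ hTm, Measure.map_add _ _ hTm]
    _ = ENNReal.ofReal (1 - p) • Measure.dirac (0 : ℝ)
        + ((volume.restrict (Set.Iio 0)).withDensity (fun x => ENNReal.ofReal (p * πslab x))
          + (volume.restrict (Set.Ioi 0)).withDensity fun x => ENNReal.ofReal (p * πslab x)) := by
        rw [hPlateau, hLeft, hRight]
    _ = ENNReal.ofReal (1 - p) • Measure.dirac (0 : ℝ)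
        + ENNReal.ofReal p • volume.withDensity fun x => ENNReal.ofReal (πslab x) := by
        congr 1
        rw [← restrict_withDensity measurableSet_Iio, ← restrict_withDensity measurableSet_Ioi,
          ← Measure.restrict_union (by
            rw [Set.disjoint_left]
            rintro x hx hx'
            simp only [Set.mem_Iio, Set.mem_Ioi] at hx hx'
            linarith) measurableSet_Ioi,
          Set.Iio_union_Ioi]
        have hnull : (volume.withDensity fun x => ENNReal.ofReal (p * πslab x)) {(0 : ℝ)} = 0 := by
          rw [withDensity_apply _ (measurableSet_singleton 0)]
          exact setLIntegral_measure_zero _ _ (by simp)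
        rw [Measure.restrict_eq_self_of_ae_mem (by
          rw [ae_iff]
          convert hnull using 2
          ext x; simp)]
        have hsm : (fun x : ℝ => ENNReal.ofReal (p * πslab x))
            = ENNReal.ofReal p • fun x : ℝ => ENNReal.ofReal (πslab x) := by
          funext x
          simp [ENNReal.ofReal_mul hp0.le, Pi.smul_apply, smul_eq_mul]
        rw [hsm, withDensity_smul _ hslabm]
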